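/- Let ℓ ≥ 1, Λ ⊆ {1,…,ℓ}, and let S^Λ_ℓ denote the set of permutations σ ∈ S_ℓ such that for all j < j' in Λ, σ(j) < σ(j'). Given positive rationals (or positive integers) i_1,…,i_ℓ, the following identity holds: Σ_{σ ∈ S^Λ_ℓ} ∏_{j=1}^{ℓ} 1/(Σ_{m=1}^{j} i_{σ^{-1}(m)}) = 1 / ∏_{j=1}^{ℓ} (i_j + Σ_{m < j, m ∈ Λ, j ∈ Λ} i_m). -/

import Mathlib

open scoped Classical


namespace PermSumAux

variable {α : Type*} [LinearOrder α]

noncomputable def Vl (i : α → ℚ) : List α → ℚ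
  | [] => 1
  | a :: t => (i a + (t.map i).sum)⁻¹ * Vl i t

noncomputable def wset (Λ : Finset α) (i : α → ℚ) (s : Finset α) (j : α) : ℚ :=
  i j + if j ∈ Λ then ∑ m ∈ (Λ ∩ s).filter (· < j), i m else 0

noncomputable def listsOf (Λ : Finset α) (s : Finset α) : Finset (List α) :=
  s.toList.permutations.toFinset.filter
    (fun l => l.Pairwise (fun a b => a ∈ Λ → b ∈ Λ → b < a))

lemma mem_listsOf {Λ s : Finset α} {l : List α} :
    l ∈ listsOf Λ s ↔ l.Perm s.toList ∧ l.Pairwise (fun a b => a ∈ Λ → b ∈ Λ → b < a) := by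
  simp [listsOf, List.mem_permutations]

lemma wset_pos {Λ s : Finset α} {i : α → ℚ} (hi : ∀ j, 0 < i j) (j : α) :
    0 < wset Λ i s j := by
  have h1 : (0:ℚ) ≤ if j ∈ Λ then ∑ m ∈ (Λ ∩ s).filter (· < j), i m else 0 := by
    split
    · exact Finset.sum_nonneg fun m _ => (hi m).le
    · exact le_rfl
  have := hi j
  unfold wset; linarith

end PermSumAux
namespace PermSumAux
variable {α : Type*} [LinearOrder α]

lemma sum_ok_wset (Λ s : Finset α) (i : α → ℚ) :
    ∑ a ∈ s.filter (fun a => a ∈ Λ → ∀ b ∈ (Λ ∩ s).erase a, b < a), wset Λ i s a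
      = ∑ x ∈ s, i x := by
  rcases (Λ ∩ s).eq_empty_or_nonempty with h | h
  · have hnot : ∀ a ∈ s, a ∉ Λ := by
      intro a ha haΛ
      exact absurd (Finset.mem_inter.2 ⟨haΛ, ha⟩) (by simp [h])
    rw [Finset.filter_true_of_mem (fun a ha => fun haΛ => absurd haΛ (hnot a ha))]
    refine Finset.sum_congr rfl fun a ha => ?_
    simp [wset, hnot a ha]
  · set M := (Λ ∩ s).max' h with hM
    have hMmem : M ∈ Λ ∩ s := (Λ ∩ s).max'_mem h
    have hA : s.filter (fun a => a ∈ Λ → ∀ b ∈ (Λ ∩ s).erase a, b < a)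
        = insert M (s.filter (fun a => a ∉ Λ)) := by
      ext a
      simp only [Finset.mem_filter, Finset.mem_insert, Finset.mem_erase]
      constructor
      · rintro ⟨has, hok⟩
        by_cases haΛ : a ∈ Λ
        · left
          have hamem : a ∈ Λ ∩ s := Finset.mem_inter.2 ⟨haΛ, has⟩
          have h1 : a ≤ M := (Λ ∩ s).le_max' a hamem
          have h2 : M ≤ a := by
            rcases eq_or_ne M a with h' | h'
            · exact h'.le
            · exact (hok haΛ M ⟨h', hMmem⟩).le
          exact le_antisymm h1 h2
        · exact Or.inr ⟨has, haΛ⟩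
      · rintro (rfl | ⟨has, haΛ⟩)
        · refine ⟨(Finset.mem_inter.1 hMmem).2, fun _ b hb => ?_⟩
          exact lt_of_le_of_ne ((Λ ∩ s).le_max' b hb.2) hb.1
        · exact ⟨has, fun h' => absurd h' haΛ⟩
    rw [hA, Finset.sum_insert (by simp [(Finset.mem_inter.1 hMmem).1])]
    have hwM : wset Λ i s M = i M + ∑ m ∈ (Λ ∩ s).erase M, i m := by
      have : (Λ ∩ s).filter (· < M) = (Λ ∩ s).erase M := by
        ext m
        simp only [Finset.mem_filter, Finset.mem_erase]
        constructor
        · rintro ⟨hm, hlt⟩; exact ⟨ne_of_lt hlt, hm⟩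
        · rintro ⟨hne, hm⟩; exact ⟨hm, lt_of_le_of_ne ((Λ ∩ s).le_max' m hm) hne⟩
      simp [wset, (Finset.mem_inter.1 hMmem).1, this]
    have hrest : ∀ a ∈ s.filter (fun a => a ∉ Λ), wset Λ i s a = i a := by
      intro a ha
      simp [wset, (Finset.mem_filter.1 ha).2]
    rw [hwM, Finset.sum_congr rfl hrest, Finset.add_sum_erase _ i hMmem]
    have hfil : Λ ∩ s = s.filter (fun a => a ∈ Λ) := by
      rw [Finset.filter_mem_eq_inter, Finset.inter_comm]
    rw [add_comm, hfil]
    rw [Finset.sum_filter, Finset.sum_filter, ← Finset.sum_add_distrib]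
    refine Finset.sum_congr rfl fun x hx => ?_
    by_cases hx' : x ∈ Λ <;> simp [hx']

end PermSumAux
namespace PermSumAux
variable {α : Type*} [LinearOrder α]

lemma cons_mem_listsOf_iff {Λ s : Finset α} {a : α} {t : List α} :
    (a :: t) ∈ listsOf Λ s ↔
      a ∈ s ∧ (a ∈ Λ → ∀ b ∈ (Λ ∩ s).erase a, b < a) ∧ t ∈ listsOf Λ (s.erase a) := by
  rw [mem_listsOf, mem_listsOf, List.pairwise_cons]
  have herase : ∀ (h : a ∈ s), (s.toList.erase a).Perm (s.erase a).toList := by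
    intro h
    rw [← Multiset.coe_eq_coe, ← Multiset.coe_erase, Finset.coe_toList, Finset.coe_toList,
      Finset.erase_val]
  constructor
  · rintro ⟨hperm, hhead, hpair⟩
    have has : a ∈ s := Finset.mem_toList.1 (hperm.mem_iff.1 List.mem_cons_self)
    have ht : t.Perm (s.erase a).toList :=
      ((hperm.trans (List.perm_cons_erase (Finset.mem_toList.2 has))).cons_inv).trans (herase has)
    have hbmem : ∀ b, b ∈ t ↔ b ∈ s.erase a := by
      intro b
      rw [ht.mem_iff, Finset.mem_toList]
    refine ⟨has, ?_, ht, hpair⟩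
    intro haΛ b hb
    rcases Finset.mem_erase.1 hb with ⟨hba, hbΛs⟩
    rcases Finset.mem_inter.1 hbΛs with ⟨hbΛ, hbs⟩
    exact hhead b ((hbmem b).2 (Finset.mem_erase.2 ⟨hba, hbs⟩)) haΛ hbΛ
  · rintro ⟨has, hok, ht, hpair⟩
    have hbmem : ∀ b, b ∈ t ↔ b ∈ s.erase a := by
      intro b
      rw [ht.mem_iff, Finset.mem_toList]
    refine ⟨?_, ?_, hpair⟩
    · exact ((ht.cons a).trans
        ((herase has).symm.cons a |>.trans (List.perm_cons_erase (Finset.mem_toList.2 has)).symm))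
    · intro b hb haΛ hbΛ
      rcases Finset.mem_erase.1 ((hbmem b).1 hb) with ⟨hba, hbs⟩
      exact hok haΛ b (Finset.mem_erase.2 ⟨hba, Finset.mem_inter.2 ⟨hbΛ, hbs⟩⟩)

end PermSumAux
namespace PermSumAux
variable {α : Type*} [LinearOrder α]

lemma wset_erase {Λ s : Finset α} {i : α → ℚ} {a j : α}
    (hok : a ∈ Λ → ∀ b ∈ (Λ ∩ s).erase a, b < a) (hj : j ∈ s.erase a) :
    wset Λ i (s.erase a) j = wset Λ i s j := by
  unfold wset
  congr 1
  by_cases hjΛ : j ∈ Λ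
  · rw [if_pos hjΛ, if_pos hjΛ]
    apply Finset.sum_congr _ (fun _ _ => rfl)
    ext m
    simp only [Finset.mem_filter, Finset.mem_inter, Finset.mem_erase]
    constructor
    · rintro ⟨⟨hmΛ, _, hms⟩, hlt⟩
      exact ⟨⟨hmΛ, hms⟩, hlt⟩
    · rintro ⟨⟨hmΛ, hms⟩, hlt⟩
      refine ⟨⟨hmΛ, ?_, hms⟩, hlt⟩
      rintro rfl
      have hja := Finset.mem_erase.1 hj
      have h2 : j < m := hok hmΛ j
        (Finset.mem_erase.2 ⟨hja.1, Finset.mem_inter.2 ⟨hjΛ, Finset.mem_of_mem_erase hj⟩⟩)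
      exact absurd hlt (not_lt.2 h2.le)
  · rw [if_neg hjΛ, if_neg hjΛ]

lemma key (Λ : Finset α) (i : α → ℚ) (hi : ∀ j, 0 < i j) (s : Finset α) :
    ∑ l ∈ listsOf Λ s, Vl i l = (∏ j ∈ s, wset Λ i s j)⁻¹ := by
  induction s using Finset.strongInduction with
  | _ s ih =>
  rcases s.eq_empty_or_nonempty with rfl | hs
  · simp [listsOf, Vl, Finset.filter_singleton]
  · haveI : Inhabited α := ⟨hs.choose⟩
    have hne : ∀ l ∈ listsOf Λ s, l ≠ [] := by
      intro l hl h
      subst h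
      have h1 := (mem_listsOf.1 hl).1.symm.eq_nil
      exact hs.ne_empty (Finset.toList_eq_nil.1 h1)
    have hstep : ∑ l ∈ listsOf Λ s, Vl i l
        = ∑ p ∈ (s.filter (fun a => a ∈ Λ → ∀ b ∈ (Λ ∩ s).erase a, b < a)).sigma
            (fun a => listsOf Λ (s.erase a)), Vl i (p.1 :: p.2) := by
      refine Finset.sum_nbij' (fun l => ⟨l.headI, l.tail⟩) (fun p => p.1 :: p.2) ?_ ?_ ?_ ?_ ?_
      · intro l hl
        obtain ⟨a, t, rfl⟩ := List.exists_cons_of_ne_nil (hne l hl)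
        rcases cons_mem_listsOf_iff.1 hl with ⟨has, hok', ht⟩
        exact Finset.mem_sigma.2 ⟨Finset.mem_filter.2 ⟨has, hok'⟩, ht⟩
      · rintro ⟨a, t⟩ hp
        rcases Finset.mem_sigma.1 hp with ⟨ha, ht⟩
        rcases Finset.mem_filter.1 ha with ⟨has, hok'⟩
        exact cons_mem_listsOf_iff.2 ⟨has, hok', ht⟩
      · intro l hl
        obtain ⟨a, t, rfl⟩ := List.exists_cons_of_ne_nil (hne l hl)
        rfl
      · rintro ⟨a, t⟩ _
        rfl
      · intro l hl
        obtain ⟨a, t, rfl⟩ := List.exists_cons_of_ne_nil (hne l hl)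
        rfl
    rw [hstep, Finset.sum_sigma]
    have hS : (0:ℚ) < ∑ x ∈ s, i x := Finset.sum_pos (fun x _ => hi x) hs
    have hinner : ∀ a ∈ s.filter (fun a => a ∈ Λ → ∀ b ∈ (Λ ∩ s).erase a, b < a),
        ∑ t ∈ listsOf Λ (s.erase a), Vl i (a :: t)
          = (∑ x ∈ s, i x)⁻¹ * (wset Λ i s a * (∏ j ∈ s, wset Λ i s j)⁻¹) := by
      intro a ha
      rcases Finset.mem_filter.1 ha with ⟨has, hok'⟩
      have h1 : ∀ t ∈ listsOf Λ (s.erase a), Vl i (a :: t) = (∑ x ∈ s, i x)⁻¹ * Vl i t := by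
        intro t ht
        have hperm := (mem_listsOf.1 ht).1
        have hsum : (t.map i).sum = ∑ x ∈ s.erase a, i x := by
          rw [(hperm.map i).sum_eq, Finset.sum_map_toList]
        show (i a + (t.map i).sum)⁻¹ * Vl i t = _
        rw [hsum, Finset.add_sum_erase s i has]
      rw [Finset.sum_congr rfl h1, ← Finset.mul_sum, ih (s.erase a) (Finset.erase_ssubset has)]
      congr 1
      have h2 : ∏ j ∈ s.erase a, wset Λ i (s.erase a) j = ∏ j ∈ s.erase a, wset Λ i s j :=
        Finset.prod_congr rfl fun j hj => wset_erase hok' hj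
      rw [h2, ← Finset.prod_erase_mul s _ has, mul_inv_rev, ← mul_assoc,
        mul_inv_cancel₀ (wset_pos hi a).ne', one_mul]
    rw [Finset.sum_congr rfl hinner, ← Finset.mul_sum, ← Finset.sum_mul, sum_ok_wset,
      ← mul_assoc, inv_mul_cancel₀ hS.ne', one_mul]

end PermSumAux
namespace PermSumAux

lemma Vl_reverse {α : Type*} [LinearOrder α] (i : α → ℚ) (l : List α) :
    Vl i l.reverse = ∏ n ∈ Finset.range l.length, (((l.take (n+1)).map i).sum)⁻¹ := by
  induction l using List.reverseRecOn with
  | nil => simp [Vl]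
  | append_singleton l' a ihl =>
    have h1 : (l' ++ [a]).reverse = a :: l'.reverse := by simp
    rw [h1]
    show (i a + (l'.reverse.map i).sum)⁻¹ * Vl i l'.reverse = _
    rw [ihl, List.length_append, List.length_singleton, Finset.prod_range_succ, mul_comm]
    congr 1
    · refine Finset.prod_congr rfl fun n hn => ?_
      rw [List.take_append_of_le_length (by have := Finset.mem_range.1 hn; omega)]
    · rw [List.take_of_length_le (by simp), List.map_append, List.sum_append]
      simp [List.map_reverse, List.sum_reverse, add_comm]

end PermSumAux
namespace PermSumAux

variable {ℓ : ℕ}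

noncomputable def Lmap (σ : Equiv.Perm (Fin ℓ)) : List (Fin ℓ) :=
  ((List.finRange ℓ).map σ.symm).reverse

lemma Lmap_nodup (σ : Equiv.Perm (Fin ℓ)) : (Lmap σ).Nodup := by
  rw [Lmap, List.nodup_reverse]
  exact (List.nodup_finRange ℓ).map σ.symm.injective

lemma Lmap_mem (σ : Equiv.Perm (Fin ℓ)) (x : Fin ℓ) : x ∈ Lmap σ := by
  rw [Lmap, List.mem_reverse, List.mem_map]
  exact ⟨σ x, List.mem_finRange _, by simp⟩

lemma Lmap_perm (σ : Equiv.Perm (Fin ℓ)) :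
    (Lmap σ).Perm (Finset.univ : Finset (Fin ℓ)).toList := by
  apply List.perm_of_nodup_nodup_toFinset_eq (Lmap_nodup σ) (Finset.nodup_toList _)
  ext x
  simp [Lmap_mem, Finset.mem_toList]

lemma pairwise_finRange_iff (S : Fin ℓ → Fin ℓ → Prop) :
    (List.finRange ℓ).Pairwise S ↔ ∀ m m' : Fin ℓ, m < m' → S m m' := by
  rw [List.pairwise_iff_getElem]
  constructor
  · intro h m m' hlt
    have h2 := h m.val m'.val (by simp) (by simp) hlt
    simpa using h2
  · intro h k k' hk hk' hlt
    simp only [List.length_finRange] at hk hk'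
    have : (List.finRange ℓ)[k] = ⟨k, hk⟩ := by simp
    have h2 : (List.finRange ℓ)[k'] = ⟨k', hk'⟩ := by simp
    rw [this, h2]
    exact h _ _ hlt

lemma Lmap_pairwise_iff (Λ : Finset (Fin ℓ)) (σ : Equiv.Perm (Fin ℓ)) :
    (Lmap σ).Pairwise (fun a b => a ∈ Λ → b ∈ Λ → b < a)
      ↔ ∀ j j', j ∈ Λ → j' ∈ Λ → j < j' → σ j < σ j' := by
  rw [Lmap, List.pairwise_reverse, List.pairwise_map, pairwise_finRange_iff]
  constructor
  · intro h j j' hjΛ hj'Λ hlt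
    rcases lt_trichotomy (σ j) (σ j') with h' | h' | h'
    · exact h'
    · exact absurd (σ.injective h') (ne_of_lt hlt)
    · have h2 := h (σ j') (σ j) h' (by simpa using hjΛ) (by simpa using hj'Λ)
      simp only [Equiv.symm_apply_apply] at h2
      exact absurd h2 (not_lt.2 hlt.le)
  · intro h m m' hlt hΛ hΛ'
    rcases lt_trichotomy (σ.symm m) (σ.symm m') with h' | h' | h'
    · exact h'
    · exact absurd (σ.symm.injective h') (ne_of_lt hlt)
    · have h2 := h _ _ hΛ hΛ' h'
      simp only [Equiv.apply_symm_apply] at h2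
      exact absurd h2 (not_lt.2 hlt.le)

lemma take_finRange_toFinset {n : ℕ} (hn : n < ℓ) :
    ((List.finRange ℓ).take (n+1)).toFinset
      = Finset.univ.filter (fun m : Fin ℓ => (m:ℕ) ≤ n) := by
  ext m
  simp only [List.mem_toFinset, Finset.mem_filter, Finset.mem_univ, true_and,
    List.mem_take_iff_getElem]
  constructor
  · rintro ⟨k, hk, rfl⟩
    simp only [List.length_finRange, lt_min_iff] at hk
    simp [hk.1.le, Nat.lt_succ_iff.1 hk.1]
  · intro hm
    refine ⟨m.val, ?_, by simp⟩
    simp only [List.length_finRange, lt_min_iff]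
    exact ⟨Nat.lt_succ_of_le hm, m.isLt⟩

lemma Vl_Lmap (i : Fin ℓ → ℚ) (σ : Equiv.Perm (Fin ℓ)) :
    Vl i (Lmap σ)
      = ∏ j : Fin ℓ, (∑ m ∈ Finset.univ.filter (fun m => m ≤ j), i (σ.symm m))⁻¹ := by
  rw [Lmap, Vl_reverse, List.length_map, List.length_finRange]
  have hstep : ∀ j : Fin ℓ,
      (∑ m ∈ Finset.univ.filter (fun m => m ≤ j), i (σ.symm m))⁻¹
        = (∑ m ∈ Finset.univ.filter (fun m : Fin ℓ => (m:ℕ) ≤ (j:ℕ)), i (σ.symm m))⁻¹ := by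
    intro j
    congr 1
  rw [Finset.prod_congr rfl (fun j _ => hstep j),
    Fin.prod_univ_eq_prod_range (fun n => (∑ m ∈ Finset.univ.filter
      (fun m : Fin ℓ => (m:ℕ) ≤ n), i (σ.symm m))⁻¹) ℓ]
  refine Finset.prod_congr rfl fun n hn => ?_
  have hn' := Finset.mem_range.1 hn
  congr 1
  rw [← List.map_take, List.map_map, ← take_finRange_toFinset hn',
    List.sum_toFinset _ ((List.take_sublist _ _).nodup (List.nodup_finRange ℓ))]
  rfl

end PermSumAux
namespace PermSumAux

lemma Lmap_injective (σ₁ σ₂ : Equiv.Perm (Fin ℓ)) (h : Lmap σ₁ = Lmap σ₂) : σ₁ = σ₂ := by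
  rw [Lmap, Lmap] at h
  have h2 := List.reverse_injective h
  have h3 : ∀ m : Fin ℓ, σ₁.symm m = σ₂.symm m := by
    intro m
    have h4 : ((List.finRange ℓ).map σ₁.symm)[(m:ℕ)]'(by simp)
        = ((List.finRange ℓ).map σ₂.symm)[(m:ℕ)]'(by simp) := by simp [h2]
    simpa using h4
  have h5 : σ₁.symm = σ₂.symm := Equiv.ext h3
  calc σ₁ = σ₁.symm.symm := (Equiv.symm_symm _).symm
  _ = σ₂.symm.symm := by rw [h5]
  _ = σ₂ := Equiv.symm_symm _

lemma Lmap_surj (l : List (Fin ℓ)) (hperm : l.Perm (Finset.univ : Finset (Fin ℓ)).toList) :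
    ∃ σ : Equiv.Perm (Fin ℓ), Lmap σ = l := by
  have hlen : l.reverse.length = ℓ := by
    rw [List.length_reverse, hperm.length_eq, Finset.length_toList, Finset.card_univ,
      Fintype.card_fin]
  have hnd : l.reverse.Nodup := by
    rw [List.nodup_reverse]
    exact hperm.nodup_iff.2 (Finset.nodup_toList _)
  have hmem : ∀ x : Fin ℓ, x ∈ l.reverse := by
    intro x
    rw [List.mem_reverse, hperm.mem_iff]
    simp [Finset.mem_toList]
  let e := List.Nodup.getEquivOfForallMemList l.reverse hnd hmem
  let τ : Fin ℓ ≃ Fin ℓ := (finCongr hlen.symm).trans e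
  refine ⟨τ.symm, ?_⟩
  rw [Lmap, Equiv.symm_symm]
  have hmap : (List.finRange ℓ).map τ = l.reverse := by
    apply List.ext_getElem (by simp [hlen])
    intro k h1 h2
    simp [τ, e, List.Nodup.getEquivOfForallMemList]
  rw [hmap, List.reverse_reverse]

end PermSumAux


/-- For `Λ ⊆ {1,…,ℓ}` and positive rationals `i₁,…,i_ℓ`, summing over the
permutations `σ` preserving the order of `Λ`:
`Σ_σ ∏ⱼ 1/(Σ_{m ≤ j} i_{σ⁻¹(m)}) = 1 / ∏ⱼ (iⱼ + Σ_{m<j, m,j ∈ Λ} i_m)`. -/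
theorem perm_sum_identity (ℓ : ℕ) (hℓ : 1 ≤ ℓ) (Λ : Finset (Fin ℓ)) (i : Fin ℓ → ℚ)
    (hi : ∀ j, 0 < i j) :
    ∑ σ ∈ Finset.univ.filter (fun σ : Equiv.Perm (Fin ℓ) =>
        ∀ j j', j ∈ Λ → j' ∈ Λ → j < j' → σ j < σ j'),
      ∏ j : Fin ℓ, (∑ m ∈ Finset.univ.filter (fun m : Fin ℓ => m ≤ j), i (σ.symm m))⁻¹ =
    (∏ j : Fin ℓ, (i j + if j ∈ Λ then ∑ m ∈ Λ.filter (fun m => m < j), i m else 0))⁻¹ := by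
  classical
  have hmain := PermSumAux.key Λ i hi Finset.univ
  have hL : ∑ σ ∈ Finset.univ.filter (fun σ : Equiv.Perm (Fin ℓ) =>
        ∀ j j', j ∈ Λ → j' ∈ Λ → j < j' → σ j < σ j'),
      ∏ j : Fin ℓ, (∑ m ∈ Finset.univ.filter (fun m : Fin ℓ => m ≤ j), i (σ.symm m))⁻¹
      = ∑ l ∈ PermSumAux.listsOf Λ Finset.univ, PermSumAux.Vl i l := by
    refine Finset.sum_bij (fun σ _ => PermSumAux.Lmap σ) ?_ ?_ ?_ ?_
    · intro σ hσ
      exact PermSumAux.mem_listsOf.2 ⟨PermSumAux.Lmap_perm σ,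
        (PermSumAux.Lmap_pairwise_iff Λ σ).2 ((Finset.mem_filter.1 hσ).2)⟩
    · intro σ₁ _ σ₂ _ h
      exact PermSumAux.Lmap_injective σ₁ σ₂ h
    · intro l hl
      obtain ⟨σ, rfl⟩ := PermSumAux.Lmap_surj l (PermSumAux.mem_listsOf.1 hl).1
      exact ⟨σ, Finset.mem_filter.2 ⟨Finset.mem_univ _,
        (PermSumAux.Lmap_pairwise_iff Λ σ).1 (PermSumAux.mem_listsOf.1 hl).2⟩, rfl⟩
    · intro σ _
      exact (PermSumAux.Vl_Lmap i σ).symm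
  rw [hL, hmain]
  congr 1
  refine Finset.prod_congr rfl fun j _ => ?_
  simp [PermSumAux.wset, Finset.inter_univ]
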